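/- Every space co-absolute to a κ-metrizable compact Hausdorff space is I-favorable; that is, if K is a κ-metrizable compact Hausdorff space, Z is a space, and there exist closed irreducible continuous surjections Z → K and Z → Y, then Y is I-favorable. -/

import Mathlib

/-- A topological space `X` is I-favorable if there is a strategy `σ` assigning to each
finite (possibly empty) sequence of open subsets of `X` an open subset of `X` such that
whenever `B₀, B₁, …` are nonempty open sets with `B₀ ⊆ σ ∅` and `B_{k+1} ⊆ σ (B₀,…,B_k)`,
the union `⋃ k, B k` is dense in `X`. (For the empty space the nonemptiness requirement
on the values of `σ` is vacuous.) -/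
def IFavorable (X : Type*) [TopologicalSpace X] : Prop :=
  ∃ σ : List (Set X) → Set X,
    (∀ l, IsOpen (σ l)) ∧
    (∀ l, Nonempty X → (σ l).Nonempty) ∧
    ∀ B : ℕ → Set X, (∀ k, IsOpen (B k)) → (∀ k, (B k).Nonempty) →
      B 0 ⊆ σ [] →
      (∀ k, B (k + 1) ⊆ σ (List.ofFn fun i : Fin (k + 1) => B i)) →
      Dense (⋃ k, B k)

/-- `f : X → Y` is a closed irreducible continuous surjection: it is continuous, closed,
surjective, and `f '' F ≠ Y` for every proper closed subset `F ⊊ X`. -/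
def ClosedIrreducibleSurjection {X Y : Type*} [TopologicalSpace X] [TopologicalSpace Y]
    (f : X → Y) : Prop :=
  Continuous f ∧ IsClosedMap f ∧ Function.Surjective f ∧
    ∀ F : Set X, IsClosed F → F ≠ Set.univ → f '' F ≠ Set.univ

/-- A set `C` is regular closed if it equals the closure of its interior. -/
def IsRegularClosed {K : Type*} [TopologicalSpace K] (C : Set K) : Prop :=
  C = closure (interior C)

/-- A compact Hausdorff space `K` is κ-metrizable if there is a function `ρ x C ≥ 0`,
defined for points `x ∈ K` and nonempty regular closed `C ⊆ K`, with: `ρ x C = 0 ↔ x ∈ C`;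
`C ⊆ C'` implies `ρ x C' ≤ ρ x C`; `x ↦ ρ x C` is continuous; and
`ρ x (cl (⋃ α, C α)) = ⨅ α, ρ x (C α)` for every increasing (transfinite) chain `C α`
of nonempty regular closed sets. -/
def KappaMetrizable (K : Type u) [TopologicalSpace K] : Prop :=
  ∃ ρ : K → Set K → ℝ,
    (∀ (x : K) (C : Set K), IsRegularClosed C → C.Nonempty → 0 ≤ ρ x C) ∧
    (∀ (x : K) (C : Set K), IsRegularClosed C → C.Nonempty → (ρ x C = 0 ↔ x ∈ C)) ∧
    (∀ (x : K) (C C' : Set K), IsRegularClosed C → C.Nonempty →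
      IsRegularClosed C' → C'.Nonempty → C ⊆ C' → ρ x C' ≤ ρ x C) ∧
    (∀ C : Set K, IsRegularClosed C → C.Nonempty → Continuous fun x => ρ x C) ∧
    (∀ (ι : Type u) [LinearOrder ι] [Nonempty ι] (C : ι → Set K), Monotone C →
      (∀ α, IsRegularClosed (C α) ∧ (C α).Nonempty) →
      ∀ x : K, ρ x (closure (⋃ α, C α)) = ⨅ α, ρ x (C α))

open Set Filter Topology

lemma isRegularClosed_closure_of_isOpen {K : Type*} [TopologicalSpace K] {U : Set K}
    (hU : IsOpen U) : IsRegularClosed (closure U) := by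
  refine Set.Subset.antisymm ?_ ?_
  · exact closure_mono (interior_maximal subset_closure hU)
  · exact (closure_mono interior_subset).trans (by rw [closure_closure])

lemma sUnion_mem_ofFn {α : Type*} {m : ℕ} (f : Fin m → Set α) :
    ⋃₀ {S | S ∈ List.ofFn f} = ⋃ t, f t := by
  have h : {S | S ∈ List.ofFn f} = Set.range f := by
    ext S; exact List.mem_ofFn' f S
  rw [h, Set.sUnion_range]

section Irr

variable {X Y : Type*} [TopologicalSpace X] [TopologicalSpace Y] {f : X → Y}

lemma preimage_smallImage_subset (f : X → Y) (U : Set X) :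
    f ⁻¹' (f '' Uᶜ)ᶜ ⊆ U := by
  intro x hx
  by_contra h
  exact hx (Set.mem_image_of_mem f h)

lemma smallImage_subset_of_subset_preimage (hsurj : Function.Surjective f)
    {U : Set X} {V : Set Y} (h : U ⊆ f ⁻¹' V) : (f '' Uᶜ)ᶜ ⊆ V := by
  intro y hy
  obtain ⟨x, rfl⟩ := hsurj y
  by_contra hv
  exact hy ⟨x, fun hxU => hv (h hxU), rfl⟩

lemma smallImage_nonempty (hf : ClosedIrreducibleSurjection f)
    {U : Set X} (hU : IsOpen U) (hne : U.Nonempty) : ((f '' Uᶜ)ᶜ).Nonempty := by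
  rw [Set.nonempty_compl]
  refine hf.2.2.2 _ hU.isClosed_compl ?_
  obtain ⟨x, hx⟩ := hne
  intro h
  exact ((h ▸ Set.mem_univ x) : x ∈ Uᶜ) hx

lemma dense_preimage_of_cis (hf : ClosedIrreducibleSurjection f)
    {D : Set Y} (hD : Dense D) : Dense (f ⁻¹' D) := by
  rw [dense_iff_closure_eq]
  by_contra h
  have h2 : f '' closure (f ⁻¹' D) ≠ Set.univ := hf.2.2.2 _ isClosed_closure h
  have hopen : IsOpen (f '' closure (f ⁻¹' D))ᶜ := (hf.2.1 _ isClosed_closure).isOpen_compl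
  obtain ⟨y, hy⟩ := Set.nonempty_compl.mpr h2
  obtain ⟨d, hdD, hdW⟩ := hD.exists_mem_open hopen ⟨y, hy⟩
  obtain ⟨x, rfl⟩ := hf.2.2.1 d
  exact hdW (Set.mem_image_of_mem f (subset_closure hdD))

lemma dense_image_of_cont_surj (hc : Continuous f) (hsurj : Function.Surjective f)
    {D : Set X} (hD : Dense D) : Dense (f '' D) := by
  rw [dense_iff_closure_eq, Set.eq_univ_iff_forall]
  intro y
  obtain ⟨x, rfl⟩ := hsurj y
  exact image_closure_subset_closure_image hc (Set.mem_image_of_mem f (hD x))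

end Irr

lemma ifavorable_of_cis_image {Z Y : Type*} [TopologicalSpace Z] [TopologicalSpace Y]
    {f : Z → Y} (hf : ClosedIrreducibleSurjection f) (h : IFavorable Z) : IFavorable Y := by
  obtain ⟨σ, hσo, hσne, hσwin⟩ := h
  obtain ⟨hc, hcl, hsurj, -⟩ := id hf
  refine ⟨fun l => (f '' (σ (l.map (f ⁻¹' ·)))ᶜ)ᶜ, ?_, ?_, ?_⟩
  · intro l
    exact (hcl _ (hσo _).isClosed_compl).isOpen_compl
  · intro l hY
    have hZ : Nonempty Z := ⟨(hsurj (Classical.choice hY)).choose⟩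
    exact smallImage_nonempty hf (hσo _) (hσne _ hZ)
  · intro V hVo hVne hV0 hVstep
    have hDense : Dense (⋃ k, f ⁻¹' (V k)) := by
      refine hσwin (fun k => f ⁻¹' (V k)) (fun k => (hVo k).preimage hc)
        (fun k => (hVne k).preimage hsurj) ?_ ?_
      · refine (Set.preimage_mono hV0).trans ?_
        simpa using preimage_smallImage_subset f (σ [])
      · intro k
        refine (Set.preimage_mono (hVstep k)).trans ?_
        have hmap : (List.ofFn fun i : Fin (k + 1) => V i).map (f ⁻¹' ·)
            = List.ofFn fun i : Fin (k + 1) => f ⁻¹' (V i) := by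
          rw [List.map_ofFn]; rfl
        rw [← hmap]
        exact preimage_smallImage_subset f _
    have him : f '' (⋃ k, f ⁻¹' (V k)) ⊆ ⋃ k, V k := by
      rw [Set.image_iUnion]
      exact Set.iUnion_mono fun k => Set.image_preimage_subset f _
    exact (dense_image_of_cont_surj hc hsurj hDense).mono him

lemma ifavorable_of_cis_preimage {Z K : Type*} [TopologicalSpace Z] [TopologicalSpace K]
    {g : Z → K} (hg : ClosedIrreducibleSurjection g) (h : IFavorable K) : IFavorable Z := by
  obtain ⟨σ, hσo, hσne, hσwin⟩ := h
  obtain ⟨hc, hcl, hsurj, -⟩ := id hg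
  refine ⟨fun l => g ⁻¹' (σ (l.map (fun U => (g '' Uᶜ)ᶜ))), ?_, ?_, ?_⟩
  · intro l
    exact (hσo _).preimage hc
  · intro l hZ
    have hK : Nonempty K := ⟨g (Classical.choice hZ)⟩
    exact (hσne _ hK).preimage hsurj
  · intro B hBo hBne hB0 hBstep
    have hwin : Dense (⋃ k, (g '' (B k)ᶜ)ᶜ) := by
      refine hσwin (fun k => (g '' (B k)ᶜ)ᶜ) (fun k => (hcl _ (hBo k).isClosed_compl).isOpen_compl)
        (fun k => smallImage_nonempty hg (hBo k) (hBne k)) ?_ ?_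
      · refine smallImage_subset_of_subset_preimage hsurj ?_
        simpa using hB0
      · intro k
        refine smallImage_subset_of_subset_preimage hsurj ?_
        refine (hBstep k).trans ?_
        have hmap : (List.ofFn fun i : Fin (k + 1) => B i).map (fun U => (g '' Uᶜ)ᶜ)
            = List.ofFn fun i : Fin (k + 1) => (g '' (B i)ᶜ)ᶜ := by
          rw [List.map_ofFn]; rfl
        exact (Set.preimage_mono (le_of_eq (congrArg σ hmap))).trans (le_refl _)
    refine (dense_preimage_of_cis hg hwin).mono ?_
    rw [Set.preimage_iUnion]
    exact Set.iUnion_mono fun k => preimage_smallImage_subset g _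

lemma ifavorable_of_kappaMetrizable {K : Type u} [TopologicalSpace K] [CompactSpace K]
    (hK : KappaMetrizable K) : IFavorable K := by
  classical
  obtain ⟨ρ, hnn, hzero, hmono, hcont, hchain⟩ := hK
  set qq : ℕ → ℝ := fun m => 1 / ((Nat.unpair m).1 + 1) with hqq
  refine ⟨fun l =>
    if (l ≠ [] ∧ ∀ S ∈ l, IsOpen S ∧ S.Nonempty) ∧
        {x | qq l.length < ρ x (closure (⋃₀ {S | S ∈ l}))}.Nonempty then
      {x | qq l.length < ρ x (closure (⋃₀ {S | S ∈ l}))}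
    else Set.univ, ?_, ?_, ?_⟩
  · -- openness
    intro l
    dsimp only
    split_ifs with h
    · obtain ⟨⟨hne, hop⟩, -⟩ := h
      have hUo : IsOpen (⋃₀ {S | S ∈ l}) := isOpen_sUnion fun S hS => (hop S hS).1
      have hreg : IsRegularClosed (closure (⋃₀ {S | S ∈ l})) :=
        isRegularClosed_closure_of_isOpen hUo
      have hCne : (closure (⋃₀ {S | S ∈ l})).Nonempty := by
        obtain ⟨S, hS⟩ := List.exists_mem_of_ne_nil l hne
        obtain ⟨x, hx⟩ := (hop S hS).2
        exact ⟨x, subset_closure ⟨S, hS, hx⟩⟩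
      exact isOpen_Ioi.preimage (hcont _ hreg hCne)
    · exact isOpen_univ
  · -- nonemptiness
    intro l hNe
    dsimp only
    split_ifs with h
    · exact h.2
    · exact Set.univ_nonempty
  · -- the winning condition
    intro B hBo hBne hB0 hstep
    set D : ℕ → Set K := fun k => ⋃ i : Fin (k + 1), B i with hD
    set C : ℕ → Set K := fun k => closure (D k) with hC
    have hDo : ∀ k, IsOpen (D k) := fun k => isOpen_iUnion fun i => hBo i
    have hBD : ∀ j k, j ≤ k → B j ⊆ D k := by
      intro j k hjk
      exact Set.subset_iUnion (fun i : Fin (k + 1) => B i) ⟨j, by omega⟩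
    have hreg : ∀ k, IsRegularClosed (C k) := fun k =>
      isRegularClosed_closure_of_isOpen (hDo k)
    have hCne : ∀ k, (C k).Nonempty := by
      intro k
      obtain ⟨x, hx⟩ := hBne 0
      exact ⟨x, subset_closure (hBD 0 k (Nat.zero_le k) hx)⟩
    have hDmono : Monotone D := by
      intro a b hab
      refine Set.iUnion_subset fun i => ?_
      exact Set.subset_iUnion (fun j : Fin (b + 1) => B j) ⟨i, by omega⟩
    have hCmono : Monotone C := fun a b hab => closure_mono (hDmono hab)
    -- identify the strategy set at stage k
    have hσk : ∀ k, B (k + 1) ⊆ Set.univ ∧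
        (( {x | qq (k+1) < ρ x (C k)}.Nonempty) →
          B (k + 1) ⊆ {x | qq (k+1) < ρ x (C k)}) := by
      intro k
      have hlen : (List.ofFn fun i : Fin (k + 1) => B i).length = k + 1 := by
        simp
      have hnil : (List.ofFn fun i : Fin (k + 1) => B i) ≠ [] := by
        intro h
        have := congrArg List.length h
        simp at this
      have hmem : ∀ S ∈ (List.ofFn fun i : Fin (k + 1) => B i), IsOpen S ∧ S.Nonempty := by
        intro S hS
        rw [List.mem_ofFn] at hS
        obtain ⟨i, rfl⟩ := hS
        exact ⟨hBo i, hBne i⟩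
      have hsu : ⋃₀ {S | S ∈ (List.ofFn fun i : Fin (k + 1) => B i)} = D k :=
        sUnion_mem_ofFn _
      constructor
      · exact fun _ _ => Set.mem_univ _
      · intro hONe
        have hthis := hstep k
        dsimp only at hthis
        have hONe' : {x | qq ((List.ofFn fun i : Fin (k + 1) => B i).length) <
            ρ x (closure (⋃₀ {S | S ∈ List.ofFn fun i : Fin (k + 1) => B i}))}.Nonempty := by
          rw [hlen, hsu]; exact hONe
        rw [if_pos ⟨⟨hnil, hmem⟩, hONe'⟩] at hthis
        refine hthis.trans ?_
        rw [hlen, hsu]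
    -- the limit set
    set Cinf : Set K := closure (⋃ k, B k) with hCinf
    have hCinfC : Cinf = closure (⋃ j : ULift.{u} ℕ, C (j.down)) := by
      apply Set.Subset.antisymm
      · apply closure_mono
        refine Set.iUnion_subset fun k => ?_
        exact (hBD k k le_rfl).trans ((subset_closure).trans
          (Set.subset_iUnion (fun j : ULift.{u} ℕ => C j.down) (ULift.up k)))
      · refine closure_minimal (Set.iUnion_subset fun j => ?_) isClosed_closure
        exact closure_mono (Set.iUnion_subset fun i => Set.subset_iUnion B (i : ℕ))
    have hCinfreg : IsRegularClosed Cinf :=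
      isRegularClosed_closure_of_isOpen (isOpen_iUnion hBo)
    have hCinfne : Cinf.Nonempty := by
      obtain ⟨x, hx⟩ := hBne 0
      exact ⟨x, subset_closure (Set.mem_iUnion.mpr ⟨0, hx⟩)⟩
    have hInf : ∀ x, ρ x Cinf = ⨅ j : ULift.{u} ℕ, ρ x (C (j.down)) := by
      intro x
      rw [hCinfC]
      refine hchain (ULift.{u} ℕ) (fun j => C j.down) ?_ (fun j => ⟨hreg _, hCne _⟩) x
      intro a b hab
      exact hCmono (by exact_mod_cast hab)
    have hBdd : ∀ x, BddBelow (Set.range fun j : ULift.{u} ℕ => ρ x (C j.down)) := by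
      intro x
      refine ⟨0, ?_⟩
      rintro r ⟨j, rfl⟩
      exact hnn x _ (hreg _) (hCne _)
    -- key claim
    have key : ∀ n : ℕ, ∃ k, ∀ y, ρ y (C k) ≤ 1 / (n + 1) := by
      by_contra hcon
      push_neg at hcon
      obtain ⟨n, hn⟩ := hcon
      set q : ℝ := 1 / (n + 1) with hq
      have hqpos : 0 < q := by positivity
      set kk : ℕ → ℕ := fun i => Nat.pair n (i + 1) - 1 with hkk
      have hkk1 : ∀ i, kk i + 1 = Nat.pair n (i + 1) := by
        intro i
        have h1 : 1 ≤ Nat.pair n (i + 1) :=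
          le_trans (Nat.succ_le_succ (Nat.zero_le i)) (Nat.right_le_pair n (i + 1))
        simp only [hkk]
        omega
      have hkki : ∀ i, i ≤ kk i := by
        intro i
        have := Nat.right_le_pair n (i + 1)
        have := hkk1 i
        omega
      have hqkk : ∀ i, qq (kk i + 1) = q := by
        intro i
        rw [hkk1 i, hqq]
        simp [Nat.unpair_pair, hq]
      choose b hb using fun i => hBne (kk i + 1)
      have hbO : ∀ i, q < ρ (b i) (C (kk i)) := by
        intro i
        have hONe : {x | qq (kk i + 1) < ρ x (C (kk i))}.Nonempty := by
          obtain ⟨y, hy⟩ := hn (kk i)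
          exact ⟨y, by rw [hqkk i]; exact hy⟩
        have := (hσk (kk i)).2 hONe (hb i)
        rw [Set.mem_setOf_eq, hqkk i] at this
        exact this
      have hbCinf : ∀ i, b i ∈ Cinf :=
        fun i => subset_closure (Set.mem_iUnion.mpr ⟨kk i + 1, hb i⟩)
      have hcomp : IsCompact Cinf := isClosed_closure.isCompact
      obtain ⟨p, hpC, hclus⟩ := hcomp.exists_mapClusterPt (f := atTop) (u := b)
        (le_principal_iff.mpr (Filter.mem_map.mpr (Filter.univ_mem' hbCinf)))
      have hp0 : ρ p Cinf = 0 := (hzero p Cinf hCinfreg hCinfne).mpr hpC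
      have hinf0 : (⨅ j : ULift.{u} ℕ, ρ p (C (j.down))) < q := by
        rw [← hInf p, hp0]; exact hqpos
      obtain ⟨j, hj⟩ := exists_lt_of_ciInf_lt hinf0
      set ks : ℕ := j.down with hks
      have hNopen : IsOpen {x | ρ x (C ks) < q} :=
        isOpen_Iio.preimage (hcont _ (hreg ks) (hCne ks))
      have hfreq : ∃ᶠ i in atTop, b i ∈ {x | ρ x (C ks) < q} :=
        (mapClusterPt_iff_frequently.mp hclus) _ (hNopen.mem_nhds hj)
      obtain ⟨i, hik, hiN⟩ := (frequently_atTop.mp hfreq) ks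
      have hsub : C ks ⊆ C (kk i) := hCmono (le_trans hik (hkki i))
      have : ρ (b i) (C (kk i)) ≤ ρ (b i) (C ks) :=
        hmono (b i) _ _ (hreg ks) (hCne ks) (hreg _) (hCne _) hsub
      have := lt_of_le_of_lt this hiN
      exact absurd this (not_lt.mpr (le_of_lt (hbO i)))
    -- conclude density
    rw [dense_iff_closure_eq, Set.eq_univ_iff_forall]
    intro x
    have hle : ∀ n : ℕ, ρ x Cinf ≤ 1 / (n + 1) := by
      intro n
      obtain ⟨k, hk⟩ := key n
      rw [hInf x]
      exact le_trans (ciInf_le (hBdd x) (ULift.up k)) (hk x)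
    have hx0 : ρ x Cinf = 0 := by
      refine le_antisymm ?_ (hnn x _ hCinfreg hCinfne)
      by_contra h
      push_neg at h
      obtain ⟨n, hn⟩ := exists_nat_one_div_lt h
      exact absurd (hle n) (not_le.mpr hn)
    exact (hzero x Cinf hCinfreg hCinfne).mp hx0

/-- Every space co-absolute to a κ-metrizable compact Hausdorff space is
I-favorable: if `K` is a κ-metrizable compact Hausdorff space and there are closed
irreducible continuous surjections `Z → K` and `Z → Y`, then `Y` is I-favorable. -/
theorem ifavorable_of_coabsolute_kappaMetrizable {K : Type u} {Y Z : Type*}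
    [TopologicalSpace K] [CompactSpace K] [T2Space K] [TopologicalSpace Y]
    [TopologicalSpace Z] (hK : KappaMetrizable K)
    (θK : Z → K) (θY : Z → Y)
    (hθK : ClosedIrreducibleSurjection θK) (hθY : ClosedIrreducibleSurjection θY) :
    IFavorable Y :=
  ifavorable_of_cis_image hθY (ifavorable_of_cis_preimage hθK (ifavorable_of_kappaMetrizable hK))
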